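/- Let k ≥ 2 be an even integer, q a prime power with q ≡ k+1 (mod 2k), and χ_k a multiplicative character of F_q of order k. Let S_k denote the set of nonzero k-th powers in F_q. Then for every a ∈ S_k, as an identity of complex numbers, k^2 · #{ b ∈ F_q : b ∈ S_k and b − a ∈ S_k } = R_k(q) + q − 2k + 1; in particular this count is independent of a. -/

import Mathlib

/-- Jacobi sum `J(A,B) = ∑_{a ∈ F} A(a) B(1-a)`. -/
noncomputable def jac {F : Type} [Field F] [Fintype F] (A B : MulChar F ℂ) : ℂ :=
  ∑ a : F, A a * B (1 - a)

/-- `R_k(q) = ∑_{1 ≤ s,t ≤ k-1, s+t ≢ 0 (k)} J(χ^s, χ^t)`. -/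
noncomputable def Rk {F : Type} [Field F] [Fintype F] (k : ℕ) (χ : MulChar F ℂ) : ℂ :=
  ∑ s ∈ Finset.Icc 1 (k - 1), ∑ t ∈ Finset.Icc 1 (k - 1),
    if (s : ZMod k) + t ≠ 0 then jac (χ ^ s) (χ ^ t) else 0

/-- `R⁻_k(q)`: as `R_k(q)` but with each term multiplied by `(-1)^{s+t}`. -/
noncomputable def Rmk {F : Type} [Field F] [Fintype F] (k : ℕ) (χ : MulChar F ℂ) : ℂ :=
  ∑ s ∈ Finset.Icc 1 (k - 1), ∑ t ∈ Finset.Icc 1 (k - 1),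
    if (s : ZMod k) + t ≠ 0 then (-1 : ℂ) ^ (s + t) * jac (χ ^ s) (χ ^ t) else 0

/-- `S_k(q) = ∑_{1 ≤ s,t,v ≤ k-1, s+t,v+t,v-s ≢ 0 (k)} J(χ^s, χ^t) J(χ^{-s}, χ^v)`. -/
noncomputable def Sk {F : Type} [Field F] [Fintype F] (k : ℕ) (χ : MulChar F ℂ) : ℂ :=
  ∑ s ∈ Finset.Icc 1 (k - 1), ∑ t ∈ Finset.Icc 1 (k - 1), ∑ v ∈ Finset.Icc 1 (k - 1),
    if (s : ZMod k) + t ≠ 0 ∧ (v : ZMod k) + t ≠ 0 ∧ (v : ZMod k) - s ≠ 0 then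
      jac (χ ^ s) (χ ^ t) * jac (χ⁻¹ ^ s) (χ ^ v) else 0

/-- `S⁻_k(q)`: as `S_k(q)` but with each term multiplied by `(-1)^{s+t}`. -/
noncomputable def Smk {F : Type} [Field F] [Fintype F] (k : ℕ) (χ : MulChar F ℂ) : ℂ :=
  ∑ s ∈ Finset.Icc 1 (k - 1), ∑ t ∈ Finset.Icc 1 (k - 1), ∑ v ∈ Finset.Icc 1 (k - 1),
    if (s : ZMod k) + t ≠ 0 ∧ (v : ZMod k) + t ≠ 0 ∧ (v : ZMod k) - s ≠ 0 then
      (-1 : ℂ) ^ (s + t) * (jac (χ ^ s) (χ ^ t) * jac (χ⁻¹ ^ s) (χ ^ v)) else 0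

lemma jac_eq {F : Type} [Field F] [Fintype F] (A B : MulChar F ℂ) : jac A B = jacobiSum A B := rfl

lemma jac_reflect {F : Type} [Field F] [Fintype F] (A B : MulChar F ℂ) :
    jac A B = B (-1) * jac ((A * B)⁻¹) B := by
  unfold jac
  rw [Finset.mul_sum]
  rw [← Equiv.sum_comp (Equiv.inv F) (fun a => A a * B (1 - a))]
  refine Finset.sum_congr rfl fun a _ => ?_
  rcases eq_or_ne a 0 with rfl | h
  · simp [MulChar.map_zero]
  · have h1 : (1 : F) - a⁻¹ = (-(1 - a)) * a⁻¹ := by field_simp; ring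
    simp only [Equiv.inv_apply]
    rw [show A a⁻¹ = (A a)⁻¹ by rw [← MulChar.inv_apply' A a, MulChar.inv_apply_eq_inv' A a],
      h1, map_mul, show B a⁻¹ = (B a)⁻¹ by rw [← MulChar.inv_apply' B a, MulChar.inv_apply_eq_inv' B a],
      show (-(1-a)) = (-1) * (1 - a) by ring, map_mul,
      MulChar.inv_apply_eq_inv', MulChar.mul_apply, mul_inv]
    ring

set_option maxHeartbeats 2000000 in
theorem stmt_16 {F : Type} [Field F] [Fintype F] (q k : ℕ)
    (hk : 2 ≤ k) (hkeven : Even k) (hq : Fintype.card F = q)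
    (hmod : q % (2 * k) = k + 1)
    (χ : MulChar F ℂ) (hχ : orderOf χ = k)
    (a : F) (ha : ∃ c : F, c ≠ 0 ∧ a = c ^ k) :
    (k : ℂ) ^ 2 *
        ({b : F | (∃ c : F, c ≠ 0 ∧ b = c ^ k) ∧ ∃ c : F, c ≠ 0 ∧ b - a = c ^ k}.ncard : ℕ) =
      Rk k χ + (q : ℂ) - 2 * (k : ℂ) + 1 := by
  classical
  have hk0 : 0 < k := by omega
  haveI : NeZero k := ⟨by omega⟩
  have hcard : Fintype.card Fˣ = q - 1 := by rw [Fintype.card_units, hq]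
  set m : ℕ := q / (2 * k) with hm
  have hdm : 2 * k * m + (k + 1) = q := by
    have h0 := Nat.div_add_mod q (2 * k)
    rw [hmod] at h0
    rw [hm]
    omega
  set r : ℕ := 2 * m + 1 with hr
  have hqr : q - 1 = k * r := by
    have h1 : k * r = 2 * k * m + k := by rw [hr]; ring
    omega
  have hq2 : 2 ≤ q := by omega
  obtain ⟨w, hwq⟩ : ∃ w, q = 2 * w + k + 1 := ⟨k * m, by
    have h2 : 2 * (k * m) = 2 * k * m := by ring
    omega⟩
  have hqodd : q % 2 = 1 := by
    obtain ⟨k', hk'⟩ := hkeven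
    omega
  -- -1 ≠ 1 in F
  have hm1 : (-1 : F) ≠ 1 := by
    have hchar : ringChar F ≠ 2 := by
      intro h2
      have := FiniteField.even_card_of_char_two h2
      rw [hq] at this
      omega
    exact Ring.neg_one_ne_one_of_char_ne_two hchar
  have hm0 : (-1 : F) ≠ 0 := neg_ne_zero.mpr one_ne_zero
  -- generator of Fˣ
  obtain ⟨g, hg⟩ := IsCyclic.exists_generator (α := Fˣ)
  have hog : orderOf g = q - 1 := by
    rw [orderOf_eq_card_of_forall_mem_zpowers hg, Nat.card_eq_fintype_card, hcard]
  have hχ1 : χ ≠ 1 := by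
    intro h; rw [h, orderOf_one] at hχ; omega
  have hζord : orderOf (χ (g : F)) = k := by
    rw [← hχ]
    rw [orderOf_eq_orderOf_iff]
    intro n
    constructor
    · intro h
      refine MulChar.ext fun u => ?_
      obtain ⟨j, hj⟩ := mem_powers_iff_mem_zpowers.mpr (hg u)
      have hj' : g ^ j = u := hj
      rw [← hj', MulChar.pow_apply_coe, MulChar.one_apply_coe, Units.val_pow_eq_pow_val,
        map_pow, ← pow_mul, mul_comm, pow_mul, h, one_pow]
    · intro h
      rw [← MulChar.pow_apply_coe, h, MulChar.one_apply_coe]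
  have hpow_unit : ∀ (ψ : MulChar F ℂ) (s : ℕ) (x : F), x ≠ 0 → (ψ ^ s) x = ψ x ^ s := by
    intro ψ s x hx
    simpa using MulChar.pow_apply_coe ψ s (Units.mk0 x hx)
  have hone : ∀ x : F, x ≠ 0 → (1 : MulChar F ℂ) x = 1 := by
    intro x hx
    simpa using MulChar.one_apply_coe (R' := ℂ) (Units.mk0 x hx)
  have hχk : χ ^ k = 1 := by rw [← hχ]; exact pow_orderOf_eq_one χ
  have hχpow1 : ∀ m : ℕ, k ∣ m → χ ^ m = 1 := by
    rintro m ⟨j, rfl⟩; rw [pow_mul, hχk, one_pow]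
  -- kernel characterization
  have hker : ∀ x : F, x ≠ 0 → (χ x = 1 ↔ ∃ c, c ≠ 0 ∧ x = c ^ k) := by
    intro x hx
    obtain ⟨j, hj⟩ := mem_powers_iff_mem_zpowers.mpr (hg (Units.mk0 x hx))
    have hj' : g ^ j = Units.mk0 x hx := hj
    have hxj : x = (g : F) ^ j := by
      rw [← Units.val_pow_eq_pow_val, hj', Units.val_mk0]
    constructor
    · intro h1
      have hz : (χ (g : F)) ^ j = 1 := by rw [← map_pow, ← hxj, h1]
      have hkj : k ∣ j := by
        rw [← hζord]; exact orderOf_dvd_of_pow_eq_one hz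
      obtain ⟨i, rfl⟩ := hkj
      exact ⟨(g : F) ^ i, pow_ne_zero _ (Units.ne_zero g),
        by rw [hxj, ← pow_mul, mul_comm]⟩
    · rintro ⟨c, hc, rfl⟩
      rw [map_pow]
      calc (χ c) ^ k = (χ ^ k) c := (hpow_unit χ k c hc).symm
        _ = 1 := by rw [hχk, hone c hc]
  -- χ(-1) = -1
  have hneg : χ (-1 : F) = -1 := by
    have h2 : χ (-1 : F) * χ (-1 : F) = 1 := by
      rw [← map_mul]; norm_num
    rcases mul_self_eq_one_iff.mp h2 with h | h
    · exfalso
      obtain ⟨c, hc, hck⟩ := (hker (-1 : F) hm0).mp h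
      set u : Fˣ := Units.mk0 c hc with hu
      have hu2k : u ^ (2 * k) = 1 := by
        ext
        rw [Units.val_pow_eq_pow_val, Units.val_one, hu, Units.val_mk0,
          show 2 * k = k * 2 by ring, pow_mul, ← hck]
        norm_num
      have hd2k : orderOf u ∣ 2 * k := orderOf_dvd_of_pow_eq_one hu2k
      have hdn : orderOf u ∣ k * r := by
        rw [← hqr, ← hcard]; exact orderOf_dvd_card
      have hndk : ¬ orderOf u ∣ k := by
        intro hd
        have : u ^ k = 1 := orderOf_dvd_iff_pow_eq_one.mp hd
        apply hm1
        rw [hck]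
        calc c ^ k = ((u : F)) ^ k := by rw [hu, Units.val_mk0]
          _ = ((u ^ k : Fˣ) : F) := by rw [Units.val_pow_eq_pow_val]
          _ = 1 := by rw [this, Units.val_one]
      apply hndk
      have hgcd : Nat.gcd (2 * k) (k * r) = k := by
        rw [show 2 * k = k * 2 by ring, Nat.gcd_mul_left]
        have : Nat.gcd 2 r = 1 := Nat.coprime_two_left.mpr (by rw [hr]; exact ⟨_, rfl⟩)
        rw [this, mul_one]
      rw [← hgcd]
      exact Nat.dvd_gcd hd2k hdn
    · exact h
  obtain ⟨c0, hc0, hac⟩ := ha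
  have ha0 : a ≠ 0 := by rw [hac]; exact pow_ne_zero _ hc0
  have hχa : χ a = 1 := (hker a ha0).mpr ⟨c0, hc0, hac⟩
  -- the sign lemma
  have hnegpow : ∀ t : ℕ, (χ ^ t) (-1 : F) = (-1 : ℂ) ^ t := by
    intro t
    rcases Nat.eq_zero_or_pos t with rfl | ht
    · rw [pow_zero, pow_zero, hone _ hm0]
    · rw [hpow_unit χ t _ hm0, hneg]
  -- indicator
  have hind : ∀ x : F, (∑ s ∈ Finset.range k, (χ ^ s) x) =
      if ∃ c : F, c ≠ 0 ∧ x = c ^ k then (k : ℂ) else 0 := by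
    intro x
    rcases eq_or_ne x 0 with rfl | hx
    · rw [if_neg]
      · exact Finset.sum_eq_zero fun s _ => MulChar.map_zero _
      · rintro ⟨c, hc, hck⟩
        exact hc ((pow_eq_zero_iff (by omega : k ≠ 0)).mp hck.symm)
    · have hterm : ∀ s ∈ Finset.range k, (χ ^ s) x = (χ x) ^ s :=
        fun s _ => hpow_unit χ s x hx
      rw [Finset.sum_congr rfl hterm]
      by_cases hxk : ∃ c : F, c ≠ 0 ∧ x = c ^ k
      · rw [if_pos hxk, (hker x hx).mpr hxk]
        simp
      · rw [if_neg hxk]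
        have hne1 : χ x ≠ 1 := fun h => hxk ((hker x hx).mp h)
        rw [geom_sum_eq hne1]
        have hxk1 : (χ x) ^ k = 1 := by
          rw [← hpow_unit χ k x hx, hχk, hone x hx]
        rw [hxk1, sub_self, zero_div]
  -- counting
  have hNcast : (({b : F | (∃ c : F, c ≠ 0 ∧ b = c ^ k) ∧ ∃ c : F, c ≠ 0 ∧ b - a = c ^ k}.ncard : ℕ) : ℂ)
      = ∑ b : F, (if ∃ c : F, c ≠ 0 ∧ b = c ^ k then (1 : ℂ) else 0) * (if ∃ c : F, c ≠ 0 ∧ b - a = c ^ k then (1 : ℂ) else 0) := by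
    rw [Set.ncard_eq_toFinset_card', Set.toFinset_setOf, Finset.card_filter]
    push_cast
    refine Finset.sum_congr rfl fun b _ => ?_
    by_cases h1 : ∃ c : F, c ≠ 0 ∧ b = c ^ k <;>
      by_cases h2 : ∃ c : F, c ≠ 0 ∧ b - a = c ^ k <;> simp [h1, h2]
  have E1 : (k : ℂ) ^ 2 * (({b : F | (∃ c : F, c ≠ 0 ∧ b = c ^ k) ∧ ∃ c : F, c ≠ 0 ∧ b - a = c ^ k}.ncard : ℕ) : ℂ)
      = ∑ b : F, (∑ s ∈ Finset.range k, (χ ^ s) b) * (∑ t ∈ Finset.range k, (χ ^ t) (b - a)) := by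
    rw [hNcast, Finset.mul_sum]
    refine Finset.sum_congr rfl fun b _ => ?_
    rw [hind b, hind (b - a)]
    by_cases h1 : ∃ c : F, c ≠ 0 ∧ b = c ^ k <;>
      by_cases h2 : ∃ c : F, c ≠ 0 ∧ b - a = c ^ k <;> simp [h1, h2] <;> ring
  have E2 : ∑ b : F, (∑ s ∈ Finset.range k, (χ ^ s) b) * (∑ t ∈ Finset.range k, (χ ^ t) (b - a))
      = ∑ s ∈ Finset.range k, ∑ t ∈ Finset.range k, ∑ b : F, (χ ^ s) b * (χ ^ t) (b - a) := by
    calc ∑ b : F, (∑ s ∈ Finset.range k, (χ ^ s) b) * (∑ t ∈ Finset.range k, (χ ^ t) (b - a))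
        = ∑ b : F, ∑ s ∈ Finset.range k, ∑ t ∈ Finset.range k, (χ ^ s) b * (χ ^ t) (b - a) :=
          Finset.sum_congr rfl fun b _ => Finset.sum_mul_sum _ _ _ _
      _ = ∑ s ∈ Finset.range k, ∑ b : F, ∑ t ∈ Finset.range k, (χ ^ s) b * (χ ^ t) (b - a) :=
          Finset.sum_comm
      _ = ∑ s ∈ Finset.range k, ∑ t ∈ Finset.range k, ∑ b : F, (χ ^ s) b * (χ ^ t) (b - a) :=
          Finset.sum_congr rfl fun s _ => Finset.sum_comm
  have hinner : ∀ s t : ℕ, (∑ b : F, (χ ^ s) b * (χ ^ t) (b - a))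
      = (-1 : ℂ) ^ t * jac (χ ^ s) (χ ^ t) := by
    intro s t
    have hχsa : (χ ^ s) a = 1 := by rw [hpow_unit χ s a ha0, hχa, one_pow]
    have hχta : (χ ^ t) a = 1 := by rw [hpow_unit χ t a ha0, hχa, one_pow]
    calc ∑ b : F, (χ ^ s) b * (χ ^ t) (b - a)
        = ∑ u : F, (χ ^ s) (a * u) * (χ ^ t) (a * u - a) := by
          rw [← Equiv.sum_comp (Equiv.mulLeft₀ a ha0) (fun b => (χ ^ s) b * (χ ^ t) (b - a))]
          simp only [Equiv.mulLeft₀_apply]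
      _ = ∑ u : F, (χ ^ s) u * ((χ ^ t) (-1 : F) * (χ ^ t) (1 - u)) := by
          refine Finset.sum_congr rfl fun u _ => ?_
          rw [show a * u - a = a * (-1 * (1 - u)) by ring, map_mul, map_mul, map_mul,
            hχsa, hχta]
          ring
      _ = (-1 : ℂ) ^ t * jac (χ ^ s) (χ ^ t) := by
          rw [hnegpow t]
          unfold jac
          rw [Finset.mul_sum]
          exact Finset.sum_congr rfl fun u _ => by ring
  -- now evaluate the double sum
  set I : Finset ℕ := Finset.Icc 1 (k - 1) with hI
  have h0I : (0 : ℕ) ∉ I := by simp [hI]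
  have hRins : Finset.range k = insert 0 I := by
    ext x
    simp only [Finset.mem_range, Finset.mem_insert, hI, Finset.mem_Icc]
    omega
  have hcardI : I.card = k - 1 := by rw [hI, Nat.card_Icc]; omega
  have hmemI : ∀ s, s ∈ I ↔ 1 ≤ s ∧ s ≤ k - 1 := fun s => by rw [hI, Finset.mem_Icc]
  have hcond : ∀ s t : ℕ, s ∈ I → t ∈ I → (((s : ZMod k) + t ≠ 0) ↔ s + t ≠ k) := by
    intro s t hs ht
    rw [hmemI] at hs ht
    rw [show ((s : ZMod k) + t) = ((s + t : ℕ) : ZMod k) by push_cast; ring,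
      Ne, ZMod.natCast_eq_zero_iff]
    constructor
    · intro h hk'
      exact h (hk' ▸ dvd_refl k)
    · intro h hdvd
      obtain ⟨m, hm⟩ := hdvd
      rcases Nat.lt_or_ge m 2 with hm2 | hm2
      · interval_cases m <;> omega
      · have : k * 2 ≤ k * m := Nat.mul_le_mul_left k hm2
        omega
  have hχpow_ne : ∀ s ∈ I, χ ^ s ≠ 1 := by
    intro s hs h
    rw [hmemI] at hs
    have hd := orderOf_dvd_of_pow_eq_one h
    rw [hχ] at hd
    have := Nat.le_of_dvd (by omega) hd
    omega
  have hJ00 : jac (χ ^ 0) (χ ^ 0) = (q : ℂ) - 2 := by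
    rw [pow_zero, jac_eq, jacobiSum_one_one, hq]
  have hJ0t : ∀ t ∈ I, jac (χ ^ 0) (χ ^ t) = -1 := fun t ht => by
    rw [pow_zero, jac_eq]; exact jacobiSum_one_nontrivial (hχpow_ne t ht)
  have hJs0 : ∀ s ∈ I, jac (χ ^ s) (χ ^ 0) = -1 := fun s hs => by
    rw [pow_zero, jac_eq, jacobiSum_comm]; exact jacobiSum_one_nontrivial (hχpow_ne s hs)
  have hdiag : ∀ s ∈ I, (-1 : ℂ) ^ (k - s) * jac (χ ^ s) (χ ^ (k - s)) = -1 := by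
    intro s hs
    have hs' := (hmemI s).mp hs
    have hinv : χ ^ (k - s) = (χ ^ s)⁻¹ := by
      apply eq_inv_of_mul_eq_one_left
      rw [← pow_add]
      exact hχpow1 _ ⟨1, by omega⟩
    rw [hinv, jac_eq, jacobiSum_nontrivial_inv (hχpow_ne s hs), hpow_unit χ s _ hm0, hneg,
      mul_neg, ← pow_add, show k - s + s = k by omega, hkeven.neg_one_pow]
  have hgeo : ∑ t ∈ Finset.range k, (-1 : ℂ) ^ t = 0 := by
    rw [geom_sum_eq (by norm_num : (-1 : ℂ) ≠ 1), hkeven.neg_one_pow]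
    simp
  have hIsum : ∑ t ∈ I, (-1 : ℂ) ^ t = -1 := by
    have h' := hgeo
    rw [hRins, Finset.sum_insert h0I, pow_zero] at h'
    linear_combination h'
  have hrow0 : ∑ t ∈ Finset.range k, (-1 : ℂ) ^ t * jac (χ ^ 0) (χ ^ t) = (q : ℂ) - 1 := by
    rw [hRins, Finset.sum_insert h0I, pow_zero, one_mul, hJ00]
    have h1 : ∑ t ∈ I, (-1 : ℂ) ^ t * jac (χ ^ 0) (χ ^ t) = ∑ t ∈ I, (-1 : ℂ) ^ t * (-1) :=
      Finset.sum_congr rfl fun t ht => by rw [hJ0t t ht]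
    rw [h1, ← Finset.sum_mul, hIsum]
    ring
  have hrows : ∀ s ∈ I, ∑ t ∈ Finset.range k, (-1 : ℂ) ^ t * jac (χ ^ s) (χ ^ t)
      = -2 + ∑ t ∈ I, (if (s : ZMod k) + t ≠ 0 then (-1 : ℂ) ^ t * jac (χ ^ s) (χ ^ t) else 0) := by
    intro s hs
    have hs' := (hmemI s).mp hs
    rw [hRins, Finset.sum_insert h0I, pow_zero, one_mul, hJs0 s hs]
    have hsplit2 : ∀ t ∈ I, (-1 : ℂ) ^ t * jac (χ ^ s) (χ ^ t)
        = (if (s : ZMod k) + t ≠ 0 then (-1 : ℂ) ^ t * jac (χ ^ s) (χ ^ t) else 0)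
          + (if (s : ZMod k) + t ≠ 0 then 0 else (-1 : ℂ) ^ t * jac (χ ^ s) (χ ^ t)) := by
      intro t ht
      split_ifs <;> ring
    rw [Finset.sum_congr rfl hsplit2, Finset.sum_add_distrib]
    have hksI : k - s ∈ I := by rw [hmemI]; omega
    have hdiagsum : ∑ t ∈ I, (if (s : ZMod k) + t ≠ 0 then 0
        else (-1 : ℂ) ^ t * jac (χ ^ s) (χ ^ t)) = -1 := by
      rw [Finset.sum_eq_single (k - s)]
      · have hc : ¬ ((s : ZMod k) + ((k - s : ℕ) : ZMod k) ≠ 0) := by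
          rw [hcond s (k - s) hs hksI]
          omega
        rw [if_neg hc, hdiag s hs]
      · intro t ht hne
        rw [if_pos]
        rw [hcond s t hs ht]
        rw [hmemI] at ht
        omega
      · intro h
        exact absurd hksI h
    rw [hdiagsum]
    ring
  -- the key reindexing: T = Rk
  have hT : ∑ s ∈ I, ∑ t ∈ I, (if (s : ZMod k) + t ≠ 0 then (-1 : ℂ) ^ t * jac (χ ^ s) (χ ^ t) else 0)
      = Rk k χ := by
    unfold Rk
    rw [← hI]
    conv_lhs => rw [Finset.sum_comm]
    conv_rhs => rw [Finset.sum_comm]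
    refine Finset.sum_congr rfl fun t ht => ?_
    have ht' := (hmemI t).mp ht
    have hsf : ∀ s ∈ I, (if (s : ZMod k) + t ≠ 0 then (-1 : ℂ) ^ t * jac (χ ^ s) (χ ^ t) else 0)
        = (if s + t ≠ k then (-1 : ℂ) ^ t * jac (χ ^ s) (χ ^ t) else 0) := by
      intro s hs
      simp only [hcond s t hs ht]
    have hsf' : ∀ s ∈ I, (if (s : ZMod k) + t ≠ 0 then jac (χ ^ s) (χ ^ t) else 0)
        = (if s + t ≠ k then jac (χ ^ s) (χ ^ t) else 0) := by
      intro s hs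
      simp only [hcond s t hs ht]
    rw [Finset.sum_congr rfl hsf, Finset.sum_congr rfl hsf',
      ← Finset.sum_filter, ← Finset.sum_filter]
    set σ : ℕ → ℕ := fun s => if s + t < k then k - (s + t) else 2 * k - (s + t) with hσ
    have hmemJ : ∀ s, s ∈ I.filter (fun s => s + t ≠ k) ↔ (1 ≤ s ∧ s ≤ k - 1 ∧ s + t ≠ k) := by
      intro s
      rw [Finset.mem_filter, hmemI]
      tauto
    refine Finset.sum_nbij' σ σ ?_ ?_ ?_ ?_ ?_
    · intro s hs
      rw [hmemJ] at hs ⊢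
      simp only [hσ]
      split_ifs <;> omega
    · intro s hs
      rw [hmemJ] at hs ⊢
      simp only [hσ]
      split_ifs <;> omega
    · intro s hs
      rw [hmemJ] at hs
      simp only [hσ]
      split_ifs <;> omega
    · intro s hs
      rw [hmemJ] at hs
      simp only [hσ]
      split_ifs <;> omega
    · intro s hs
      rw [hmemJ] at hs
      have hσdvd : k ∣ (σ s + t + s) := by
        simp only [hσ]
        split_ifs with h
        · exact ⟨1, by omega⟩
        · exact ⟨2, by omega⟩
      have hinvσ : (χ ^ (σ s) * χ ^ t)⁻¹ = χ ^ s := by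
        apply inv_eq_of_mul_eq_one_right
        rw [← pow_add, ← pow_add]
        exact hχpow1 _ hσdvd
      rw [jac_reflect (χ ^ (σ s)) (χ ^ t), hinvσ, hnegpow t]
  -- final assembly
  have E4 : ∑ s ∈ Finset.range k, ∑ t ∈ Finset.range k, (-1 : ℂ) ^ t * jac (χ ^ s) (χ ^ t)
      = Rk k χ + (q : ℂ) - 2 * (k : ℂ) + 1 := by
    have hkc : ((k - 1 : ℕ) : ℂ) = (k : ℂ) - 1 := by
      push_cast [Nat.cast_sub (by omega : 1 ≤ k)]
      ring
    calc ∑ s ∈ Finset.range k, ∑ t ∈ Finset.range k, (-1 : ℂ) ^ t * jac (χ ^ s) (χ ^ t)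
        = ∑ s ∈ insert 0 I, ∑ t ∈ Finset.range k, (-1 : ℂ) ^ t * jac (χ ^ s) (χ ^ t) := by
          rw [← hRins]
      _ = (∑ t ∈ Finset.range k, (-1 : ℂ) ^ t * jac (χ ^ 0) (χ ^ t))
            + ∑ s ∈ I, ∑ t ∈ Finset.range k, (-1 : ℂ) ^ t * jac (χ ^ s) (χ ^ t) :=
          Finset.sum_insert h0I
      _ = ((q : ℂ) - 1) + ∑ s ∈ I, (-2 +
            ∑ t ∈ I, (if (s : ZMod k) + t ≠ 0 then (-1 : ℂ) ^ t * jac (χ ^ s) (χ ^ t) else 0)) := by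
          rw [hrow0, Finset.sum_congr rfl hrows]
      _ = ((q : ℂ) - 1) + ((I.card : ℕ) • (-2 : ℂ) +
            ∑ s ∈ I, ∑ t ∈ I, (if (s : ZMod k) + t ≠ 0 then (-1 : ℂ) ^ t * jac (χ ^ s) (χ ^ t) else 0)) := by
          rw [Finset.sum_add_distrib, Finset.sum_const]
      _ = Rk k χ + (q : ℂ) - 2 * (k : ℂ) + 1 := by
          rw [hT, hcardI, nsmul_eq_mul, hkc]
          ring
  calc (k : ℂ) ^ 2 * (({b : F | (∃ c : F, c ≠ 0 ∧ b = c ^ k) ∧ ∃ c : F, c ≠ 0 ∧ b - a = c ^ k}.ncard : ℕ) : ℂ)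
      = ∑ b : F, (∑ s ∈ Finset.range k, (χ ^ s) b) * (∑ t ∈ Finset.range k, (χ ^ t) (b - a)) := E1
    _ = ∑ s ∈ Finset.range k, ∑ t ∈ Finset.range k, ∑ b : F, (χ ^ s) b * (χ ^ t) (b - a) := E2
    _ = ∑ s ∈ Finset.range k, ∑ t ∈ Finset.range k, (-1 : ℂ) ^ t * jac (χ ^ s) (χ ^ t) :=
        Finset.sum_congr rfl fun s _ => Finset.sum_congr rfl fun t _ => hinner s t
    _ = Rk k χ + (q : ℂ) - 2 * (k : ℂ) + 1 := E4
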